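/- Let n ≥ 2 and F_i = 2^{i-1} · i!. The map f_n : F_n → {0, 1, ..., 2^{n-1}·n! − 1} defined by f_n(π) = Σ_{i=1}^{n−1} inv_i(π) · F_{n−i} is a bijection. -/

import Mathlib

/-- A signed permutation `π` of `[n]`: `π(i) = ε i · σ(i)` with `σ` a permutation
of `[n]` and signs `ε i ∈ {±1}`.  Positions are encoded by `Fin n`
(position `i ∈ [n]` corresponds to `⟨i-1, _⟩ : Fin n`). -/
structure SignedPerm (n : ℕ) where
  σ : Equiv.Perm (Fin n)
  ε : Fin n → ℤ
  hε : ∀ i, ε i = 1 ∨ ε i = -1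

namespace SignedPerm

variable {n : ℕ}

/-- The signed value `π(i) = ε i · σ(i) ∈ {-n, …, -1, 1, …, n}` (1-based value). -/
def val (π : SignedPerm n) (i : Fin n) : ℤ :=
  π.ε i * ((π.σ i : ℕ) + 1)

/-- The standard basis vector `e i` of `ℝ^n`. -/
def e (i : Fin n) : Fin n → ℝ := Pi.single i 1

/-- The action of a signed permutation on `ℝ^n`, determined by
`π · e i = ε i · e (σ i)`. -/
def act (π : SignedPerm n) (v : Fin n → ℝ) : Fin n → ℝ :=
  fun j => (π.ε (π.σ.symm j) : ℝ) * v (π.σ.symm j)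

/-- The positive root system `Φₙ⁺ = {e k, e i + e j, e i - e j : k, i < j}` of `Bₙ`. -/
def PhiPos (n : ℕ) : Set (Fin n → ℝ) :=
  {v | (∃ k : Fin n, v = e k) ∨ ∃ i j : Fin n, i < j ∧ (v = e i + e j ∨ v = e i - e j)}

/-- The positive roots `Φₙ,ᵢ⁺ = {e i, e i + e j, e i - e j : i < j ≤ n}`. -/
def PhiPosI (n : ℕ) (i : Fin n) : Set (Fin n → ℝ) :=
  {v | v = e i ∨ ∃ j : Fin n, i < j ∧ (v = e i + e j ∨ v = e i - e j)}

/-- The `i`-inversion number `invᵢ π = #{v ∈ Φₙ,ᵢ⁺ : π · v ∈ -Φₙ⁺}`. -/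
noncomputable def invi (i : Fin n) (π : SignedPerm n) : ℕ :=
  Set.ncard {v | v ∈ PhiPosI n i ∧ -(π.act v) ∈ PhiPos n}

/-- The inversion number `inv π = #{v ∈ Φₙ⁺ : π · v ∈ -Φₙ⁺}`. -/
noncomputable def inv (π : SignedPerm n) : ℕ :=
  Set.ncard {v | v ∈ PhiPos n ∧ -(π.act v) ∈ PhiPos n}

end SignedPerm


namespace SignedPerm

variable {n : ℕ}

lemma e_apply (i j : Fin n) : e i j = if j = i then 1 else 0 := Pi.single_apply i 1 j

lemma e_inj : Function.Injective (e (n := n)) := by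
  intro i j h
  by_contra hne
  have h1 := congrFun h i
  simp [e_apply, hne] at h1

lemma smul_e_mem_PhiPos {a : Fin n} {s : ℝ} (hs : s = 1 ∨ s = -1) :
    (s • e a) ∈ PhiPos n ↔ s = 1 := by
  constructor
  · rintro (⟨k, hk⟩ | ⟨i, j, hij, hv | hv⟩)
    · have h1 := congrFun hk a
      have h2 := congrFun hk k
      simp only [Pi.smul_apply, e_apply, smul_eq_mul] at h1 h2
      rcases hs with rfl | rfl <;> split_ifs at h1 h2 <;> revert h1 h2 <;> norm_num
    · have h1 := congrFun hv i
      have h2 := congrFun hv j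
      simp only [Pi.smul_apply, Pi.add_apply, e_apply, smul_eq_mul, hij.ne, hij.ne',
        if_false, eq_self_iff_true, if_true] at h1 h2
      rcases hs with rfl | rfl <;> split_ifs at h1 h2 <;> revert h1 h2 <;> norm_num
    · have h1 := congrFun hv i
      have h2 := congrFun hv j
      simp only [Pi.smul_apply, Pi.sub_apply, e_apply, smul_eq_mul, hij.ne, hij.ne',
        if_false, eq_self_iff_true, if_true] at h1 h2
      rcases hs with rfl | rfl <;> split_ifs at h1 h2 <;> revert h1 h2 <;> norm_num
  · rintro rfl
    exact Or.inl ⟨a, by simp⟩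

lemma pair_mem_PhiPos {a b : Fin n} (hab : a ≠ b) {s t : ℝ}
    (hs : s = 1 ∨ s = -1) (ht : t = 1 ∨ t = -1) :
    (s • e a + t • e b) ∈ PhiPos n ↔
      (s = 1 ∧ t = 1) ∨ (s = 1 ∧ t = -1 ∧ a < b) ∨ (s = -1 ∧ t = 1 ∧ b < a) := by
  constructor
  · rintro (⟨k, hk⟩ | ⟨i, j, hij, hv | hv⟩)
    · have h1 := congrFun hk a
      have h2 := congrFun hk b
      simp only [Pi.add_apply, Pi.smul_apply, e_apply, smul_eq_mul, hab, Ne.symm hab,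
        if_false, eq_self_iff_true, if_true] at h1 h2
      rcases hs with rfl | rfl <;> rcases ht with rfl | rfl <;>
        split_ifs at h1 h2 <;>
        first
          | exact absurd (‹a = k›.trans ‹b = k›.symm) hab
          | (revert h1 h2; norm_num)
    · have h1 := congrFun hv a
      have h2 := congrFun hv b
      simp only [Pi.add_apply, Pi.smul_apply, e_apply, smul_eq_mul, hab, Ne.symm hab,
        if_false, eq_self_iff_true, if_true] at h1 h2
      rcases hs with rfl | rfl <;> rcases ht with rfl | rfl <;>
        split_ifs at h1 h2 <;>
        first
          | exact Or.inl ⟨rfl, rfl⟩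
          | exact absurd (‹a = i›.symm.trans ‹a = j›) hij.ne
          | exact absurd (‹b = i›.symm.trans ‹b = j›) hij.ne
          | exact absurd (‹a = i›.trans ‹b = i›.symm) hab
          | exact absurd (‹a = j›.trans ‹b = j›.symm) hab
          | (revert h1 h2; norm_num)
    · have h1 := congrFun hv a
      have h2 := congrFun hv b
      simp only [Pi.add_apply, Pi.sub_apply, Pi.smul_apply, e_apply, smul_eq_mul, hab,
        Ne.symm hab, if_false, eq_self_iff_true, if_true] at h1 h2
      rcases hs with rfl | rfl <;> rcases ht with rfl | rfl <;>
        split_ifs at h1 h2 <;>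
        first
          | exact Or.inl ⟨rfl, rfl⟩
          | exact Or.inr (Or.inl ⟨rfl, rfl, by simp only [‹a = i›, ‹b = j›]; exact hij⟩)
          | exact Or.inr (Or.inr ⟨rfl, rfl, by simp only [‹a = j›, ‹b = i›]; exact hij⟩)
          | exact absurd (‹a = i›.symm.trans ‹a = j›) hij.ne
          | exact absurd (‹b = i›.symm.trans ‹b = j›) hij.ne
          | exact absurd (‹a = i›.trans ‹b = i›.symm) hab
          | exact absurd (‹a = j›.trans ‹b = j›.symm) hab
          | (revert h1 h2; norm_num)
  · rintro (⟨rfl, rfl⟩ | ⟨rfl, rfl, hlt⟩ | ⟨rfl, rfl, hlt⟩)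
    · rcases lt_or_gt_of_ne hab with h | h
      · exact Or.inr ⟨a, b, h, Or.inl (by rw [one_smul, one_smul])⟩
      · exact Or.inr ⟨b, a, h, Or.inl (by rw [one_smul, one_smul, add_comm])⟩
    · exact Or.inr ⟨a, b, hlt, Or.inr (by rw [one_smul, neg_one_smul, ← sub_eq_add_neg])⟩
    · exact Or.inr ⟨b, a, hlt, Or.inr (by rw [neg_one_smul, one_smul, neg_add_eq_sub])⟩


lemma eps_real (π : SignedPerm n) (i : Fin n) : (π.ε i : ℝ) = 1 ∨ (π.ε i : ℝ) = -1 := by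
  rcases π.hε i with h | h <;> simp [h]

lemma neg_eps_real (π : SignedPerm n) (i : Fin n) : (-(π.ε i : ℝ)) = 1 ∨ (-(π.ε i : ℝ)) = -1 := by
  rcases π.hε i with h | h <;> simp [h]

lemma act_e (π : SignedPerm n) (i : Fin n) :
    π.act (e i) = ((π.ε i : ℝ)) • e (π.σ i) := by
  funext j
  simp only [act, Pi.smul_apply, smul_eq_mul, e_apply]
  by_cases h : j = π.σ i
  · subst h; simp
  · have h' : π.σ.symm j ≠ i := fun hh => h (by rw [← hh, Equiv.apply_symm_apply])
    simp [h', h]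

lemma act_add (π : SignedPerm n) (v w : Fin n → ℝ) :
    π.act (v + w) = π.act v + π.act w := by
  funext j; simp [act]; ring

lemma act_sub (π : SignedPerm n) (v w : Fin n → ℝ) :
    π.act (v - w) = π.act v - π.act w := by
  funext j; simp [act]; ring

lemma neg_act_e (π : SignedPerm n) (i : Fin n) :
    -(π.act (e i)) = (-(π.ε i : ℝ)) • e (π.σ i) := by
  rw [act_e]; funext j; simp [neg_mul]

lemma neg_act_pair (π : SignedPerm n) (i j : Fin n) :
    -(π.act (e i + e j)) = (-(π.ε i : ℝ)) • e (π.σ i) + (-(π.ε j : ℝ)) • e (π.σ j) := by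
  rw [act_add, act_e, act_e]; funext x; simp; ring

lemma neg_act_sub (π : SignedPerm n) (i j : Fin n) :
    -(π.act (e i - e j)) = (-(π.ε i : ℝ)) • e (π.σ i) + ((π.ε j : ℝ)) • e (π.σ j) := by
  rw [act_sub, act_e, act_e]; funext x; simp; ring

/-- condition for `e i + e j` to be inverted -/
def Pc (π : SignedPerm n) (i j : Fin n) : Prop :=
  (-(π.ε i : ℝ) = 1 ∧ -(π.ε j : ℝ) = 1) ∨
    (-(π.ε i : ℝ) = 1 ∧ -(π.ε j : ℝ) = -1 ∧ π.σ i < π.σ j) ∨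
    (-(π.ε i : ℝ) = -1 ∧ -(π.ε j : ℝ) = 1 ∧ π.σ j < π.σ i)

/-- condition for `e i - e j` to be inverted -/
def Mc (π : SignedPerm n) (i j : Fin n) : Prop :=
  (-(π.ε i : ℝ) = 1 ∧ (π.ε j : ℝ) = 1) ∨
    (-(π.ε i : ℝ) = 1 ∧ (π.ε j : ℝ) = -1 ∧ π.σ i < π.σ j) ∨
    (-(π.ε i : ℝ) = -1 ∧ (π.ε j : ℝ) = 1 ∧ π.σ j < π.σ i)

lemma invSet_eq (π : SignedPerm n) (i : Fin n) :
    {v | v ∈ PhiPosI n i ∧ -(π.act v) ∈ PhiPos n} =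
      (if π.ε i = -1 then {e i} else (∅ : Set (Fin n → ℝ))) ∪
      ((fun j => e i + e j) '' {j | i < j ∧ Pc π i j}) ∪
      ((fun j => e i - e j) '' {j | i < j ∧ Mc π i j}) := by
  ext v
  constructor
  · rintro ⟨rfl | ⟨j, hij, rfl | rfl⟩, hneg⟩
    · rw [neg_act_e, smul_e_mem_PhiPos (neg_eps_real π i)] at hneg
      have : π.ε i = -1 := by
        have : (π.ε i : ℝ) = -1 := by linarith
        exact_mod_cast this
      left; left; simp [this]
    · rw [neg_act_pair,
        pair_mem_PhiPos (fun h => hij.ne (π.σ.injective h)) (neg_eps_real π i)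
          (neg_eps_real π j)] at hneg
      left; right
      exact ⟨j, ⟨hij, hneg⟩, rfl⟩
    · rw [neg_act_sub,
        pair_mem_PhiPos (fun h => hij.ne (π.σ.injective h)) (neg_eps_real π i)
          (eps_real π j)] at hneg
      right
      exact ⟨j, ⟨hij, hneg⟩, rfl⟩
  · rintro ((hv | ⟨j, ⟨hij, hP⟩, rfl⟩) | ⟨j, ⟨hij, hM⟩, rfl⟩)
    · split_ifs at hv with hε
      · rcases hv with rfl
        refine ⟨Or.inl rfl, ?_⟩
        rw [neg_act_e, smul_e_mem_PhiPos (neg_eps_real π i)]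
        simp [hε]
      · exact absurd hv (Set.notMem_empty v)
    · refine ⟨Or.inr ⟨j, hij, Or.inl rfl⟩, ?_⟩
      rw [neg_act_pair,
        pair_mem_PhiPos (fun h => hij.ne (π.σ.injective h)) (neg_eps_real π i)
          (neg_eps_real π j)]
      exact hP
    · refine ⟨Or.inr ⟨j, hij, Or.inr rfl⟩, ?_⟩
      rw [neg_act_sub,
        pair_mem_PhiPos (fun h => hij.ne (π.σ.injective h)) (neg_eps_real π i)
          (eps_real π j)]
      exact hM

open scoped Classical

def mcode (σ : Equiv.Perm (Fin n)) (i : Fin n) : ℕ :=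
  ((Finset.Ioi i).filter (fun j => σ j < σ i)).card

lemma mcode_le (σ : Equiv.Perm (Fin n)) (i : Fin n) : mcode σ i ≤ n - 1 - i.val :=
  le_trans (Finset.card_filter_le _ _) (le_of_eq (Fin.card_Ioi i))

lemma e_add_ne (i j : Fin n) (hij : i ≠ j) : e i + e j ≠ e i := by
  intro h
  have := congrFun h j
  simp [e_apply, Ne.symm hij] at this

lemma e_sub_ne (i j : Fin n) (hij : i ≠ j) : e i - e j ≠ e i := by
  intro h
  have := congrFun h j
  simp [e_apply, Ne.symm hij] at this

lemma e_add_ne_sub (i j j' : Fin n) (hij : i ≠ j) : e i + e j ≠ e i - e j' := by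
  intro h
  have := congrFun h j
  simp [e_apply, Ne.symm hij] at this
  split_ifs at this <;> norm_num at this

lemma invi_eq (π : SignedPerm n) (i : Fin n) :
    invi i π = if π.ε i = 1 then mcode π.σ i
      else 2 * (n - 1 - i.val) + 1 - mcode π.σ i := by
  rw [invi, invSet_eq]
  set A := (if π.ε i = -1 then {e i} else (∅ : Set (Fin n → ℝ))) with hA
  set B := ((fun j => e i + e j) '' {j | i < j ∧ Pc π i j}) with hB
  set C := ((fun j => e i - e j) '' {j | i < j ∧ Mc π i j}) with hC
  have hAfin : A.Finite := by
    rw [hA]; split_ifs; exacts [Set.finite_singleton _, Set.finite_empty]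
  have hBfin : B.Finite := Set.Finite.image _ (Set.toFinite _)
  have hCfin : C.Finite := Set.Finite.image _ (Set.toFinite _)
  have hmemA : ∀ v ∈ A, v = e i := by
    intro v hv; rw [hA] at hv; split_ifs at hv
    · exact hv
    · exact absurd hv (Set.notMem_empty v)
  have hAB : Disjoint A B := by
    rw [Set.disjoint_left]
    intro v hvA hvB
    obtain ⟨j, ⟨hij, -⟩, rfl⟩ := hvB
    exact e_add_ne i j hij.ne (hmemA _ hvA)
  have hAC : Disjoint A C := by
    rw [Set.disjoint_left]
    intro v hvA hvC
    obtain ⟨j, ⟨hij, -⟩, rfl⟩ := hvC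
    exact e_sub_ne i j hij.ne (hmemA _ hvA)
  have hBC : Disjoint B C := by
    rw [Set.disjoint_left]
    intro v hvB hvC
    obtain ⟨j, ⟨hij, -⟩, rfl⟩ := hvB
    obtain ⟨j', ⟨hij', -⟩, hj'⟩ := hvC
    exact e_add_ne_sub i j j' hij.ne hj'.symm
  rw [Set.ncard_union_eq (Set.disjoint_union_left.mpr ⟨hAC, hBC⟩) (hAfin.union hBfin) hCfin,
    Set.ncard_union_eq hAB hAfin hBfin]
  have hAcard : A.ncard = if π.ε i = -1 then 1 else 0 := by
    rw [hA]; split_ifs <;> simp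
  have hBcard : B.ncard = ((Finset.Ioi i).filter (fun j => Pc π i j)).card := by
    rw [hB, Set.ncard_image_of_injective _ (fun x y h => e_inj (add_left_cancel h))]
    rw [show {j | i < j ∧ Pc π i j} = ↑((Finset.Ioi i).filter (fun j => Pc π i j)) by
      ext j; simp [Finset.mem_filter]]
    exact Set.ncard_coe_finset _
  have hCcard : C.ncard = ((Finset.Ioi i).filter (fun j => Mc π i j)).card := by
    rw [hC, Set.ncard_image_of_injective _ (fun x y h => e_inj (sub_right_inj.mp h))]
    rw [show {j | i < j ∧ Mc π i j} = ↑((Finset.Ioi i).filter (fun j => Mc π i j)) by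
      ext j; simp [Finset.mem_filter]]
    exact Set.ncard_coe_finset _
  rw [hAcard, hBcard, hCcard, Finset.card_filter, Finset.card_filter, add_assoc,
    ← Finset.sum_add_distrib]
  rcases π.hε i with h | h
  · rw [if_pos h, if_neg (by rw [h]; decide), zero_add, mcode, Finset.card_filter]
    refine Finset.sum_congr rfl fun j hj => ?_
    rcases π.hε j with hj' | hj' <;>
      · norm_num [Pc, Mc, h, hj']
        try (split_ifs <;> norm_num)
  · rw [if_pos h, if_neg (show ¬π.ε i = 1 by rw [h]; decide)]
    have hsum : (∑ j ∈ Finset.Ioi i,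
          ((if Pc π i j then 1 else 0) + (if Mc π i j then 1 else 0)))
        = ∑ j ∈ Finset.Ioi i, (1 + if π.σ i < π.σ j then 1 else 0) :=
      Finset.sum_congr rfl fun j hj => by
        rcases π.hε j with hj' | hj' <;>
          · norm_num [Pc, Mc, h, hj']
            try (split_ifs <;> norm_num)
    rw [hsum, Finset.sum_add_distrib, Finset.sum_const, smul_eq_mul, mul_one,
      ← Finset.card_filter]
    have hswap : ((Finset.Ioi i).filter fun j => π.σ i < π.σ j)
        = ((Finset.Ioi i).filter fun j => ¬ π.σ j < π.σ i) :=
      Finset.filter_congr fun j hj => by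
        constructor
        · exact fun hlt => not_lt.mpr hlt.le
        · intro hnl
          exact lt_of_le_of_ne (not_lt.mp hnl)
            fun hh => (Finset.mem_Ioi.mp hj).ne (π.σ.injective hh)
    have hpart := Finset.card_filter_add_card_filter_not
      (s := Finset.Ioi i) (p := fun j => π.σ j < π.σ i)
    have hm : mcode π.σ i ≤ (Finset.Ioi i).card := Finset.card_filter_le _ _
    have hN : (Finset.Ioi i).card = n - 1 - i.val := Fin.card_Ioi i
    rw [hswap]
    simp only [mcode] at *
    omega

lemma mem_PhiPosI_coords {i : Fin n} {v : Fin n → ℝ} (h : v ∈ PhiPosI n i) :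
    v i = 1 ∧ ∀ k, k < i → v k = 0 := by
  rcases h with rfl | ⟨j, hij, rfl | rfl⟩
  · constructor
    · simp [e_apply]
    · intro k hk; simp [e_apply, hk.ne]
  · constructor
    · simp [e_apply, hij.ne, Ne.symm hij.ne]
    · intro k hk
      simp [e_apply, hk.ne, (hk.trans hij).ne]
  · constructor
    · simp [e_apply, hij.ne, Ne.symm hij.ne]
    · intro k hk
      simp [e_apply, hk.ne, (hk.trans hij).ne]

lemma phiPos_eq_iUnion : PhiPos n = ⋃ i, PhiPosI n i := by
  ext v
  constructor
  · rintro (⟨k, rfl⟩ | ⟨i, j, hij, hv⟩)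
    · exact Set.mem_iUnion.mpr ⟨k, Or.inl rfl⟩
    · exact Set.mem_iUnion.mpr ⟨i, Or.inr ⟨j, hij, hv⟩⟩
  · intro hv
    obtain ⟨i, hi⟩ := Set.mem_iUnion.mp hv
    rcases hi with rfl | ⟨j, hij, rfl | rfl⟩
    · exact Or.inl ⟨i, rfl⟩
    · exact Or.inr ⟨i, j, hij, Or.inl rfl⟩
    · exact Or.inr ⟨i, j, hij, Or.inr rfl⟩

lemma ncard_iUnion_fin {α : Type*} {k : ℕ} (f : Fin k → Set α)
    (hf : ∀ b, (f b).Finite) (hd : ∀ a b, a ≠ b → Disjoint (f a) (f b)) :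
    (⋃ b, f b).ncard = ∑ b, (f b).ncard := by
  have key : ∀ s : Finset (Fin k), (⋃ b ∈ s, f b).ncard = ∑ b ∈ s, (f b).ncard := by
    intro s
    induction s using Finset.induction with
    | empty => simp
    | insert _ _ hx ih =>
      rename_i a s'
      rw [Finset.set_biUnion_insert, Finset.sum_insert hx, ← ih]
      refine Set.ncard_union_eq ?_ (hf a) ?_
      · exact Set.disjoint_iUnion_right.mpr fun b =>
          Set.disjoint_iUnion_right.mpr fun hb => hd a b (fun hh => hx (hh ▸ hb))
      · exact Set.Finite.biUnion (Set.finite_mem_finset s') fun b _ => hf b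
  have : (⋃ b, f b) = ⋃ b ∈ Finset.univ, f b := by simp
  rw [this, key Finset.univ]

lemma invi_finite (π : SignedPerm n) (i : Fin n) :
    {v | v ∈ PhiPosI n i ∧ -(π.act v) ∈ PhiPos n}.Finite := by
  rw [invSet_eq]
  refine Set.Finite.union (Set.Finite.union ?_ ?_) ?_
  · split_ifs; exacts [Set.finite_singleton _, Set.finite_empty]
  · exact Set.Finite.image _ (Set.toFinite _)
  · exact Set.Finite.image _ (Set.toFinite _)

lemma inv_eq_sum (π : SignedPerm n) : inv π = ∑ i, invi i π := by
  have hU : {v | v ∈ PhiPos n ∧ -(π.act v) ∈ PhiPos n}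
      = ⋃ i, {v | v ∈ PhiPosI n i ∧ -(π.act v) ∈ PhiPos n} := by
    ext v
    simp only [Set.mem_setOf_eq, Set.mem_iUnion, phiPos_eq_iUnion (n := n)]
    constructor
    · rintro ⟨⟨i, hi⟩, hneg⟩
      exact ⟨i, hi, hneg⟩
    · rintro ⟨i, hi, hneg⟩
      exact ⟨⟨i, hi⟩, hneg⟩
  rw [inv, hU, ncard_iUnion_fin _ (invi_finite π)]
  · rfl
  · intro a b hab
    rw [Set.disjoint_left]
    rintro v ⟨hva, -⟩ ⟨hvb, -⟩
    rcases lt_or_gt_of_ne hab with h | h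
    · have h1 := (mem_PhiPosI_coords hva).1
      have h2 := (mem_PhiPosI_coords hvb).2 a h
      rw [h1] at h2; norm_num at h2
    · have h1 := (mem_PhiPosI_coords hvb).1
      have h2 := (mem_PhiPosI_coords hva).2 b h
      rw [h1] at h2; norm_num at h2

lemma sigma_val_eq (σ : Equiv.Perm (Fin n)) (i : Fin n) :
    (σ i).val = mcode σ i + ((Finset.Iio i).filter (fun j => σ j < σ i)).card := by
  classical
  have h1 : (Finset.univ.filter (fun j => σ j < σ i)).card = (σ i).val := by
    rw [← Fin.card_Iio (σ i)]
    apply Finset.card_bij (fun j _ => σ j)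
    · intro a ha
      simp only [Finset.mem_filter, Finset.mem_univ, true_and] at ha
      simpa [Finset.mem_Iio] using ha
    · intro a _ b _ hab
      exact σ.injective hab
    · intro b hb
      refine ⟨σ.symm b, ?_, by simp⟩
      simp only [Finset.mem_filter, Finset.mem_univ, true_and, Equiv.apply_symm_apply]
      simpa [Finset.mem_Iio] using hb
  have h2 : Finset.univ = Finset.Iio i ∪ insert i (Finset.Ioi i) := by
    ext j
    simp only [Finset.mem_univ, Finset.mem_union, Finset.mem_insert, Finset.mem_Iio,
      Finset.mem_Ioi, true_iff]
    rcases lt_trichotomy j i with h | h | h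
    · exact Or.inl h
    · exact Or.inr (Or.inl h)
    · exact Or.inr (Or.inr h)
  rw [h2, Finset.filter_union, Finset.card_union_of_disjoint, Finset.filter_insert,
    if_neg (lt_irrefl _)] at h1
  · rw [← h1, mcode]; ring
  · refine Finset.disjoint_filter_filter ?_
    rw [Finset.disjoint_left]
    intro j hj hj2
    simp only [Finset.mem_Iio] at hj
    simp only [Finset.mem_insert, Finset.mem_Ioi] at hj2
    rcases hj2 with rfl | hj2
    · exact absurd hj (lt_irrefl _)
    · exact absurd (hj.trans hj2) (lt_irrefl _)

lemma lehmer_aux {σ τ : Equiv.Perm (Fin n)} {i : Fin n}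
    (hm : mcode σ i = mcode τ i) (hagree : ∀ j, j < i → σ j = τ j)
    (hlt : σ i < τ i) : False := by
  classical
  have h1 := sigma_val_eq σ i
  have h2 := sigma_val_eq τ i
  have hfe : (Finset.Iio i).filter (fun j => τ j < τ i)
      = (Finset.Iio i).filter (fun j => σ j < τ i) := by
    apply Finset.filter_congr
    intro j hj
    rw [hagree j (Finset.mem_Iio.mp hj)]
  rw [hfe] at h2
  set Ls := (Finset.Iio i).filter (fun j => σ j < σ i) with hLs
  set Lt := (Finset.Iio i).filter (fun j => σ j < τ i) with hLt
  have hsub : Ls ⊆ Lt := by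
    intro j hj
    simp only [hLs, hLt, Finset.mem_filter] at *
    exact ⟨hj.1, hj.2.trans hlt⟩
  have hdiff : (Lt \ Ls).card = Lt.card - Ls.card := Finset.card_sdiff_of_subset hsub
  -- inject Lt \ Ls into the integer interval (σ i, τ i)
  have hinj : (Lt \ Ls).card ≤ (Finset.Ico ((σ i).val + 1) ((τ i).val)).card := by
    apply Finset.card_le_card_of_injOn (fun j => (σ j).val)
    · intro j hj
      simp only [Finset.mem_coe, Finset.mem_sdiff, hLs, hLt, Finset.mem_filter, Finset.mem_Iio] at hj
      obtain ⟨⟨hji, hjt⟩, hns⟩ := hj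
      have hne : σ j ≠ σ i := fun hh => hji.ne (σ.injective hh)
      have hge : ¬ σ j < σ i := fun hh => hns ⟨hji, hh⟩
      simp only [Finset.mem_coe, Finset.mem_Ico]
      constructor
      · have : σ i < σ j := lt_of_le_of_ne (not_lt.mp hge) (Ne.symm hne)
        exact this
      · exact hjt
    · intro a _ b _ hab
      exact σ.injective (Fin.val_injective hab)
  rw [Nat.card_Ico] at hinj
  omega

lemma lehmer_inj {σ τ : Equiv.Perm (Fin n)} (h : ∀ i, mcode σ i = mcode τ i) : σ = τ := by
  suffices H : ∀ m : ℕ, ∀ i : Fin n, i.val < m → σ i = τ i by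
    exact Equiv.ext fun i => H (i.val + 1) i (Nat.lt_succ_self _)
  intro m
  induction m with
  | zero => exact fun i hi => absurd hi (Nat.not_lt_zero _)
  | succ m ih =>
    intro i hi
    have hagree : ∀ j, j < i → σ j = τ j := fun j hj =>
      ih j (by rw [Fin.lt_def] at hj; omega)
    rcases lt_trichotomy (σ i) (τ i) with hlt | heq | hgt
    · exact absurd (lehmer_aux (h i) hagree hlt) not_false
    · exact heq
    · exact absurd (lehmer_aux (h i).symm (fun j hj => (hagree j hj).symm) hgt) not_false

lemma ext' {π π' : SignedPerm n} (h1 : π.σ = π'.σ) (h2 : π.ε = π'.ε) : π = π' := by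
  cases π; cases π'; simp_all

def spEquiv : SignedPerm n ≃ (Equiv.Perm (Fin n) × (Fin n → Bool)) where
  toFun π := (π.σ, fun i => decide (π.ε i = 1))
  invFun p := ⟨p.1, fun i => if p.2 i then 1 else -1, fun i => by
    by_cases hb : p.2 i <;> simp [hb]⟩
  left_inv π := by
    refine ext' rfl (funext fun i => ?_)
    rcases π.hε i with h | h <;> simp [h]
  right_inv p := by
    refine Prod.ext rfl (funext fun i => ?_)
    rcases hb : p.2 i with _ | _ <;> simp [hb]

noncomputable instance : Fintype (SignedPerm n) := Fintype.ofEquiv _ spEquiv.symm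

lemma card_signedPerm : Fintype.card (SignedPerm n) = Nat.factorial n * 2 ^ n := by
  rw [Fintype.card_congr spEquiv, Fintype.card_prod, Fintype.card_perm, Fintype.card_fun]
  simp

lemma invi_le (π : SignedPerm n) (i : Fin n) :
    invi i π < 2 * (n - 1 - i.val) + 2 := by
  rw [invi_eq]
  have := mcode_le π.σ i
  split_ifs <;> omega

lemma eps_eq_one_iff (π : SignedPerm n) (i : Fin n) :
    π.ε i = 1 ↔ invi i π ≤ n - 1 - i.val := by
  rw [invi_eq]
  have := mcode_le π.σ i
  rcases π.hε i with h | h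
  · rw [if_pos h]
    exact ⟨fun _ => this, fun _ => h⟩
  · rw [if_neg (show ¬π.ε i = 1 by rw [h]; decide)]
    constructor
    · intro hh; rw [hh] at h; exact absurd h (by decide)
    · intro hh; omega

lemma code_inj {π π' : SignedPerm n} (h : ∀ i, invi i π = invi i π') : π = π' := by
  have hε : ∀ i, π.ε i = π'.ε i := by
    intro i
    have h1 := eps_eq_one_iff π i
    have h2 := eps_eq_one_iff π' i
    rcases π.hε i with ha | ha <;> rcases π'.hε i with hb | hb
    · rw [ha, hb]
    · exfalso
      have := h2.mpr (h i ▸ h1.mp ha)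
      rw [this] at hb; exact absurd hb (by decide)
    · exfalso
      have := h1.mpr ((h i).symm ▸ h2.mp hb)
      rw [this] at ha; exact absurd ha (by decide)
    · rw [ha, hb]
  have hσ : π.σ = π'.σ := by
    apply lehmer_inj
    intro i
    have hi := h i
    rw [invi_eq, invi_eq] at hi
    have m1 := mcode_le π.σ i
    have m2 := mcode_le π'.σ i
    rcases π.hε i with ha | ha
    · rw [if_pos ha, if_pos (hε i ▸ ha)] at hi
      exact hi
    · rw [if_neg (show ¬π.ε i = 1 by rw [ha]; decide),
        if_neg (show ¬π'.ε i = 1 by rw [← hε i, ha]; decide)] at hi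
      omega
  exact ext' hσ (funext hε)

noncomputable def D (π : SignedPerm n) : ∀ i : Fin n, Fin (2 * (n - 1 - i.val) + 2) :=
  fun i => ⟨invi i π, invi_le π i⟩

lemma prod_two_mul (m : ℕ) :
    ∏ x ∈ Finset.range m, (2 * (x + 1)) = 2 ^ m * Nat.factorial m := by
  induction m with
  | zero => simp
  | succ m ih =>
    rw [Finset.prod_range_succ, ih, Nat.factorial_succ]
    ring

lemma prod_bases : ∏ i : Fin n, (2 * (n - 1 - i.val) + 2) = 2 ^ n * Nat.factorial n := by
  rw [Fin.prod_univ_eq_prod_range (fun i => 2 * (n - 1 - i) + 2)]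
  rw [← Finset.prod_range_reflect]
  have hc : ∀ j ∈ Finset.range n, 2 * (n - 1 - (n - 1 - j)) + 2 = 2 * (j + 1) := by
    intro j hj
    have := Finset.mem_range.mp hj
    omega
  rw [Finset.prod_congr rfl hc, prod_two_mul]

lemma D_bijective : Function.Bijective (D (n := n)) := by
  rw [Fintype.bijective_iff_injective_and_card]
  constructor
  · intro π π' h
    exact code_inj fun i => congrArg Fin.val (congrFun h i)
  · rw [card_signedPerm, Fintype.card_pi]
    simp only [Fintype.card_fin]
    rw [prod_bases]
    ring

lemma S_succ (β d : ℕ → ℕ) (k : ℕ) :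
    ∑ i ∈ Finset.range (k+1), d i * ∏ j ∈ Finset.Ico (i+1) (k+1), β j
      = (∑ i ∈ Finset.range k, d i * ∏ j ∈ Finset.Ico (i+1) k, β j) * β k + d k := by
  rw [Finset.sum_range_succ]
  have h1 : ∏ j ∈ Finset.Ico (k+1) (k+1), β j = 1 := by simp
  rw [h1, mul_one, Finset.sum_mul]
  congr 1
  apply Finset.sum_congr rfl
  intro i hi
  have hik : i + 1 ≤ k := Finset.mem_range.mp hi
  rw [Finset.prod_Ico_succ_top hik, mul_assoc]

lemma mr_lt (β : ℕ → ℕ) : ∀ (k : ℕ) (d : ℕ → ℕ), (∀ i, i < k → d i < β i) →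
    ∑ i ∈ Finset.range k, d i * ∏ j ∈ Finset.Ico (i+1) k, β j
      < ∏ j ∈ Finset.range k, β j := by
  intro k
  induction k with
  | zero => intro d _; simp
  | succ k ih =>
    intro d hd
    rw [S_succ, Finset.prod_range_succ]
    have h1 := ih d (fun i hi => hd i (Nat.lt_succ_of_lt hi))
    have h2 := hd k (Nat.lt_succ_self k)
    set S := ∑ i ∈ Finset.range k, d i * ∏ j ∈ Finset.Ico (i+1) k, β j
    set P := ∏ j ∈ Finset.range k, β j
    have key : S * β k + d k + 1 ≤ P * β k := by
      calc S * β k + d k + 1 ≤ S * β k + β k := by omega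
        _ = (S + 1) * β k := by ring
        _ ≤ P * β k := Nat.mul_le_mul_right _ (Nat.succ_le_of_lt h1)
    exact Nat.lt_of_succ_le key

lemma mr_inj (β : ℕ → ℕ) : ∀ (k : ℕ) (d d' : ℕ → ℕ),
    (∀ i, i < k → d i < β i) → (∀ i, i < k → d' i < β i) →
    (∑ i ∈ Finset.range k, d i * ∏ j ∈ Finset.Ico (i+1) k, β j)
      = (∑ i ∈ Finset.range k, d' i * ∏ j ∈ Finset.Ico (i+1) k, β j) →
    ∀ i, i < k → d i = d' i := by
  intro k
  induction k with
  | zero => intro d d' _ _ _ i hi; omega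
  | succ k ih =>
    intro d d' hd hd' hsum i hi
    rw [S_succ, S_succ] at hsum
    set S := ∑ i ∈ Finset.range k, d i * ∏ j ∈ Finset.Ico (i+1) k, β j with hS
    set S' := ∑ i ∈ Finset.range k, d' i * ∏ j ∈ Finset.Ico (i+1) k, β j with hS'
    have e1 : (S * β k + d k) % β k = d k := by
      rw [add_comm, Nat.add_mul_mod_self_right,
        Nat.mod_eq_of_lt (hd k (Nat.lt_succ_self k))]
    have e2 : (S' * β k + d' k) % β k = d' k := by
      rw [add_comm, Nat.add_mul_mod_self_right,
        Nat.mod_eq_of_lt (hd' k (Nat.lt_succ_self k))]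
    have hdk : d k = d' k := by rw [← e1, ← e2, hsum]
    have hSS : S = S' := by
      have hβ : 0 < β k := lt_of_le_of_lt (Nat.zero_le _) (hd k (Nat.lt_succ_self k))
      have : S * β k = S' * β k := by omega
      exact Nat.eq_of_mul_eq_mul_right hβ this
    rcases Nat.lt_succ_iff_lt_or_eq.mp hi with h | h
    · exact ih d d' (fun i hi => hd i (Nat.lt_succ_of_lt hi))
        (fun i hi => hd' i (Nat.lt_succ_of_lt hi)) hSS i h
    · rw [h]; exact hdk

lemma mr_surj (β : ℕ → ℕ) : ∀ (k m : ℕ), (∀ i, i < k → 0 < β i) →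
    m < ∏ j ∈ Finset.range k, β j →
    ∃ d : ℕ → ℕ, (∀ i, i < k → d i < β i) ∧
      m = ∑ i ∈ Finset.range k, d i * ∏ j ∈ Finset.Ico (i+1) k, β j := by
  intro k
  induction k with
  | zero =>
    intro m _ hm
    simp only [Finset.prod_range_zero] at hm
    exact ⟨fun _ => 0, fun i hi => absurd hi (Nat.not_lt_zero _), by
      simp; omega⟩
  | succ k ih =>
    intro m hpos hm
    have hβ : 0 < β k := hpos k (Nat.lt_succ_self k)
    rw [Finset.prod_range_succ] at hm
    obtain ⟨d, hd, hsum⟩ := ih (m / β k) (fun i hi => hpos i (Nat.lt_succ_of_lt hi))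
      ((Nat.div_lt_iff_lt_mul hβ).mpr hm)
    refine ⟨fun i => if i = k then m % β k else d i, ?_, ?_⟩
    · intro i hi
      dsimp only
      by_cases h : i = k
      · rw [if_pos h, h]; exact Nat.mod_lt _ hβ
      · rw [if_neg h]
        exact hd i (by omega)
    · dsimp only
      rw [S_succ]
      have hc : ∑ i ∈ Finset.range k,
            (if i = k then m % β k else d i) * ∏ j ∈ Finset.Ico (i+1) k, β j
          = ∑ i ∈ Finset.range k, d i * ∏ j ∈ Finset.Ico (i+1) k, β j := by
        apply Finset.sum_congr rfl
        intro i hi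
        rw [if_neg (Finset.mem_range.mp hi).ne]
      rw [hc, ← hsum, if_pos rfl, mul_comm (m / β k) (β k), Nat.div_add_mod]

lemma W_eval {n : ℕ} (hn : 2 ≤ n) : ∀ t, t ≤ n - 1 →
    ∏ j ∈ Finset.Ico (n - 1 - t) (n - 1), (2 * (n - 1 - j) + 2)
      = 2 ^ t * Nat.factorial (t + 1) := by
  intro t
  induction t with
  | zero => intro _; simp
  | succ t ih =>
    intro ht
    have h1 : n - 1 - (t+1) < n - 1 := by omega
    rw [Finset.prod_eq_prod_Ico_succ_bot h1]
    have e1 : n - 1 - (t+1) + 1 = n - 1 - t := by omega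
    have e2 : n - 1 - (n - 1 - (t+1)) = t + 1 := by omega
    rw [e1, e2, ih (by omega), Nat.factorial_succ (t+1)]
    ring

/-- digits as a function on ℕ -/
noncomputable def dig (π : SignedPerm n) (i : ℕ) : ℕ :=
  if h : i < n then invi ⟨i, h⟩ π else 0

lemma dig_lt (hn : 2 ≤ n) (π : SignedPerm n) (i : ℕ) (hi : i < n - 1) :
    dig π i < 2 * (n - 1 - i) + 2 := by
  rw [dig, dif_pos (by omega : i < n)]
  exact invi_le π ⟨i, by omega⟩

lemma f_eq (hn : 2 ≤ n) (π : SignedPerm n) :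
    ∑ i ∈ Finset.univ.filter (fun i : Fin n => i.val + 1 ≤ n - 1),
        invi i π * (2 ^ (n - 2 - i.val) * Nat.factorial (n - 1 - i.val))
      = ∑ i ∈ Finset.range (n-1),
          dig π i * ∏ j ∈ Finset.Ico (i+1) (n-1), (2 * (n - 1 - j) + 2) := by
  rw [Finset.sum_filter]
  have hstep : ∀ a : Fin n, dig π a.val = invi a π := fun a => dif_pos a.isLt
  rw [show (∑ a : Fin n, if a.val + 1 ≤ n - 1 then
        invi a π * (2 ^ (n - 2 - a.val) * Nat.factorial (n - 1 - a.val)) else 0)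
      = ∑ a : Fin n, if a.val + 1 ≤ n - 1 then
        dig π a.val * (2 ^ (n - 2 - a.val) * Nat.factorial (n - 1 - a.val)) else 0
    from Finset.sum_congr rfl fun a _ => by rw [hstep]]
  rw [Fin.sum_univ_eq_sum_range (fun j => if j + 1 ≤ n - 1 then
    dig π j * (2 ^ (n - 2 - j) * Nat.factorial (n - 1 - j)) else 0)]
  · rw [show Finset.range n = Finset.range (n-1) ∪ Finset.Ico (n-1) n by
      rw [Finset.range_eq_Ico, ← Finset.Ico_union_Ico_eq_Ico (Nat.zero_le _) (by omega : n - 1 ≤ n),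
        ← Finset.range_eq_Ico]]
    rw [Finset.sum_union (by
      rw [Finset.disjoint_left]
      intro a ha ha'
      simp only [Finset.mem_range] at ha
      simp only [Finset.mem_Ico] at ha'
      omega)]
    have hz : ∑ j ∈ Finset.Ico (n-1) n, (if j + 1 ≤ n - 1 then
        dig π j * (2 ^ (n - 2 - j) * Nat.factorial (n - 1 - j)) else 0) = 0 := by
      apply Finset.sum_eq_zero
      intro j hj
      rw [if_neg (by simp only [Finset.mem_Ico] at hj; omega)]
    rw [hz, add_zero]
    apply Finset.sum_congr rfl
    intro j hj
    have hjn : j < n - 1 := Finset.mem_range.mp hj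
    rw [if_pos (by omega)]
    have e3 : n - 1 - j = n - 2 - j + 1 := by omega
    have he : n - 1 - (n - 2 - j) = j + 1 := by omega
    rw [e3, ← W_eval hn (n - 2 - j) (by omega), he]

lemma inv_eq_digsum (hn : 2 ≤ n) (π : SignedPerm n) :
    inv π = (∑ i ∈ Finset.range (n-1), dig π i) + dig π (n-1) := by
  rw [inv_eq_sum]
  rw [show (∑ i : Fin n, invi i π) = ∑ i : Fin n, dig π i.val from
    Finset.sum_congr rfl fun a _ => (show dig π a.val = invi a π from dif_pos a.isLt).symm]
  rw [Fin.sum_univ_eq_sum_range (fun j => dig π j)]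
  rw [show Finset.range n = Finset.range ((n-1)+1) by rw [Nat.sub_add_cancel (by omega)]]
  rw [Finset.sum_range_succ]

lemma dig_last_lt (hn : 2 ≤ n) (π : SignedPerm n) : dig π (n-1) < 2 := by
  rw [dig, dif_pos (by omega : n - 1 < n)]
  have := invi_le π ⟨n-1, by omega⟩
  simpa using this


end SignedPerm

open SignedPerm in
/-- With `Fᵢ = 2^(i-1) · i!`, the map
`fₙ(π) = ∑_{i=1}^{n-1} invᵢ(π) · F_{n-i}` is a bijection from the signed even
permutation group `Fₙ ⊆ Bₙ` (those `π` with `inv π` even) onto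
`{0, 1, …, 2^(n-1)·n! - 1}` (position `i ∈ [n]` is `i.val + 1` in 1-based
indexing, so `n - i = n - 1 - i.val` and `(n - i) - 1 = n - 2 - i.val`). -/
theorem f_bijective (n : ℕ) (hn : 2 ≤ n) :
    Set.BijOn
      (fun π : SignedPerm n =>
        ∑ i ∈ Finset.univ.filter (fun i : Fin n => i.val + 1 ≤ n - 1),
          invi i π * (2 ^ (n - 2 - i.val) * Nat.factorial (n - 1 - i.val)))
      {π : SignedPerm n | Even (SignedPerm.inv π)}
      {m : ℕ | m < 2 ^ (n - 1) * Nat.factorial n} := by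
  have hprod : ∏ j ∈ Finset.range (n-1), (2 * (n - 1 - j) + 2)
      = 2 ^ (n-1) * Nat.factorial n := by
    have h := W_eval hn (n-1) le_rfl
    rw [Nat.sub_self, ← Finset.range_eq_Ico] at h
    rw [h, Nat.sub_add_cancel (by omega)]
  refine ⟨?_, ?_, ?_⟩
  · -- MapsTo
    intro π _
    simp only [Set.mem_setOf_eq]
    rw [f_eq hn π, ← hprod]
    exact mr_lt _ (n-1) (dig π) (fun i hi => dig_lt hn π i hi)
  · -- InjOn
    intro π hπ π' hπ' heq
    simp only [Set.mem_setOf_eq] at hπ hπ'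
    simp only at heq
    rw [f_eq hn π, f_eq hn π'] at heq
    have hdig : ∀ i, i < n-1 → dig π i = dig π' i :=
      mr_inj _ (n-1) _ _ (fun i hi => dig_lt hn π i hi)
        (fun i hi => dig_lt hn π' i hi) heq
    have hsum_eq : ∑ i ∈ Finset.range (n-1), dig π i
        = ∑ i ∈ Finset.range (n-1), dig π' i :=
      Finset.sum_congr rfl fun i hi => hdig i (Finset.mem_range.mp hi)
    have hlast : dig π (n-1) = dig π' (n-1) := by
      have e1 := inv_eq_digsum hn π
      have e2 := inv_eq_digsum hn π'
      have b1 := dig_last_lt hn π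
      have b2 := dig_last_lt hn π'
      rw [Nat.even_iff] at hπ hπ'
      omega
    apply code_inj
    intro i
    have h1 : invi i π = dig π i.val :=
      (show dig π i.val = invi i π from dif_pos i.isLt).symm
    have h2 : invi i π' = dig π' i.val :=
      (show dig π' i.val = invi i π' from dif_pos i.isLt).symm
    rw [h1, h2]
    rcases (by omega : i.val < n - 1 ∨ i.val = n - 1) with h | h
    · exact hdig i.val h
    · rw [h, hlast]
  · -- SurjOn
    intro m hm
    simp only [Set.mem_setOf_eq] at hm
    obtain ⟨c, hc, hm_eq⟩ := mr_surj (fun j => 2 * (n - 1 - j) + 2) (n-1) m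
      (fun i _ => by omega) (by rw [hprod]; exact hm)
    set S := ∑ i ∈ Finset.range (n-1), c i with hS
    obtain ⟨π, hπ⟩ := D_bijective.2 (fun i : Fin n =>
      if h : i.val < n - 1 then ⟨c i.val, by have := hc i.val h; omega⟩
      else (⟨S % 2, by have := Nat.mod_lt S (show 0 < 2 by omega); omega⟩ :
        Fin (2 * (n - 1 - i.val) + 2)))
    have hπc : ∀ i : Fin n, invi i π = if h : i.val < n - 1 then c i.val else S % 2 := by
      intro i
      have hv := congrArg Fin.val (congrFun hπ i)
      by_cases h : i.val < n - 1
      · rw [dif_pos h]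
        rw [dif_pos h] at hv
        exact hv
      · rw [dif_neg h]
        rw [dif_neg h] at hv
        exact hv
    have hdig1 : ∀ i, i < n - 1 → dig π i = c i := by
      intro i hi
      rw [dig, dif_pos (by omega : i < n), hπc ⟨i, by omega⟩, dif_pos hi]
    have hdig2 : dig π (n-1) = S % 2 := by
      rw [dig, dif_pos (by omega : n - 1 < n), hπc ⟨n-1, by omega⟩,
        dif_neg (by simp)]
    refine ⟨π, ?_, ?_⟩
    · simp only [Set.mem_setOf_eq]
      rw [inv_eq_digsum hn π, hdig2,
        Finset.sum_congr rfl fun i hi => hdig1 i (Finset.mem_range.mp hi), ← hS]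
      rw [Nat.even_iff]
      omega
    · simp only
      rw [f_eq hn π, hm_eq]
      exact Finset.sum_congr rfl fun i hi => by
        rw [hdig1 i (Finset.mem_range.mp hi)]
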